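/- arXiv:1710.09251 — 2 statements merged into one kernel-verified Lean document; each statement's English description precedes it below -/
import Mathlib

section
/- Let A and B be rings, ${}_AP_B$ and ${}_BQ_A$ bimodules, and ν: P ⊗_B Q → A an A-A-bimodule homomorphism admitting an adjunction element. If some A-A-bimodule homomorphism φ: P ⊗_B Q → A is a split epimorphism of A-A-bimodules, then ν itself is a split epimorphism of A-A-bimodules. -/
/-! ### A balanced tensor product of a right module and a left module
over a possibly noncommutative ring, constructed as a quotient of the
`ℤ`-tensor product. -/

open MulOpposite
open scoped TensorProduct

section BalCore

variable (R : Type*) [Ring R] (M : Type*) [AddCommGroup M] [Module Rᵐᵒᵖ M]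
  (N : Type*) [AddCommGroup N] [Module R N]

/-- The subgroup of relations defining the balanced tensor product. -/
def balRel : Submodule ℤ (TensorProduct ℤ M N) :=
  Submodule.span ℤ {x | ∃ (m : M) (r : R) (n : N), x = (op r • m) ⊗ₜ[ℤ] n - m ⊗ₜ[ℤ] (r • n)}

/-- The balanced tensor product `M ⊗[R] N` of a right `R`-module `M` and a
left `R`-module `N`. -/
def Bal : Type _ := TensorProduct ℤ M N ⧸ balRel R M N

noncomputable instance : AddCommGroup (Bal R M N) := Submodule.Quotient.addCommGroup _

variable {M N}

/-- The canonical image of `m ⊗ n` in the balanced tensor product. -/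
noncomputable def Bal.tmul (m : M) (n : N) : Bal R M N := Submodule.Quotient.mk (m ⊗ₜ[ℤ] n)

theorem Bal.add_tmul (m m' : M) (n : N) :
    Bal.tmul R (m + m') n = Bal.tmul R m n + Bal.tmul R m' n := by
  show Submodule.Quotient.mk _ = _
  rw [TensorProduct.add_tmul]
  rfl

theorem Bal.tmul_add (m : M) (n n' : N) :
    Bal.tmul R m (n + n') = Bal.tmul R m n + Bal.tmul R m n' := by
  show Submodule.Quotient.mk _ = _
  rw [TensorProduct.tmul_add]
  rfl

theorem Bal.zero_tmul (n : N) : Bal.tmul R (0 : M) n = 0 := by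
  show Submodule.Quotient.mk _ = _
  rw [TensorProduct.zero_tmul]
  rfl

theorem Bal.tmul_zero (m : M) : Bal.tmul R m (0 : N) = 0 := by
  show Submodule.Quotient.mk _ = _
  rw [TensorProduct.tmul_zero]
  rfl

/-- The fundamental balancing relation `(m · r) ⊗ n = m ⊗ (r · n)`. -/
theorem Bal.op_smul_tmul (m : M) (r : R) (n : N) :
    Bal.tmul R (op r • m) n = Bal.tmul R m (r • n) :=
  (Submodule.Quotient.eq _).2 (Submodule.subset_span ⟨m, r, n, rfl⟩)

theorem Bal.induction_on {C : Bal R M N → Prop} (x : Bal R M N) (zero : C 0)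
    (tmul : ∀ m n, C (Bal.tmul R m n)) (add : ∀ x y, C x → C y → C (x + y)) : C x := by
  obtain ⟨y, rfl⟩ := Submodule.Quotient.mk_surjective _ x
  induction y using TensorProduct.induction_on with
  | zero => exact zero
  | tmul m n => exact tmul m n
  | add a b ha hb =>
      have : (Submodule.Quotient.mk (a + b) : Bal R M N)
          = Submodule.Quotient.mk a + Submodule.Quotient.mk b := rfl
      rw [this]; exact add _ _ ha hb

/-- Lift a balanced biadditive map to the balanced tensor product. -/
noncomputable def Bal.liftFun {T : Type*} [AddCommGroup T] (f : M → N → T)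
    (h1 : ∀ m m' n, f (m + m') n = f m n + f m' n)
    (h2 : ∀ m n n', f m (n + n') = f m n + f m n')
    (h3 : ∀ (m : M) (r : R) (n : N), f (op r • m) n = f m (r • n)) : Bal R M N →+ T :=
  letI f₂ : M →+ N →+ T :=
    AddMonoidHom.mk' (fun m => AddMonoidHom.mk' (f m) (h2 m))
      (fun m m' => AddMonoidHom.ext fun n => h1 m m' n)
  letI bil : M →ₗ[ℤ] N →ₗ[ℤ] T :=
    { toFun := fun m => (f₂ m).toIntLinearMap
      map_add' := fun m m' => LinearMap.ext fun n => by simp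
      map_smul' := fun z m => LinearMap.ext fun n => by
        simp [map_zsmul] }
  ((balRel R M N).liftQ (TensorProduct.lift bil) (by
    rw [balRel, Submodule.span_le]
    rintro x ⟨m, r, n, rfl⟩
    change TensorProduct.lift bil ((op r • m) ⊗ₜ[ℤ] n - m ⊗ₜ[ℤ] (r • n)) = 0
    rw [map_sub, TensorProduct.lift.tmul, TensorProduct.lift.tmul]
    simp [bil, f₂, h3 m r n])).toAddMonoidHom

@[simp] theorem Bal.liftFun_tmul {T : Type*} [AddCommGroup T] (f : M → N → T)
    (h1 : ∀ m m' n, f (m + m') n = f m n + f m' n)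
    (h2 : ∀ m n n', f m (n + n') = f m n + f m n')
    (h3 : ∀ (m : M) (r : R) (n : N), f (op r • m) n = f m (r • n)) (m : M) (n : N) :
    Bal.liftFun R f h1 h2 h3 (Bal.tmul R m n) = f m n := by
  simp [Bal.liftFun, Bal.tmul, Submodule.Quotient.mk]
  rfl

theorem Bal.addHom_ext {T : Type*} [AddCommGroup T] {f g : Bal R M N →+ T}
    (h : ∀ m n, f (Bal.tmul R m n) = g (Bal.tmul R m n)) : f = g := by
  ext x
  refine Bal.induction_on R (C := fun z => f z = g z) x (by simp) h
    (fun x y hx hy => by simp only [map_add]; rw [hx, hy])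

end BalCore
section BalModule

variable (R : Type*) [Ring R] {M : Type*} [AddCommGroup M] [Module Rᵐᵒᵖ M]
  {N : Type*} [AddCommGroup N] [Module R N]

section Left

variable {S : Type*} [Ring S] [Module S M] [SMulCommClass S Rᵐᵒᵖ M]

/-- The left action on the balanced tensor product through the first factor. -/
noncomputable def Bal.lsmulHom (s : S) : Bal R M N →+ Bal R M N :=
  Bal.liftFun R (fun m n => Bal.tmul R (s • m) n)
    (fun m m' n => by
      show Bal.tmul R (s • (m + m')) n = Bal.tmul R (s • m) n + Bal.tmul R (s • m') n
      rw [smul_add, Bal.add_tmul])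
    (fun m n n' => Bal.tmul_add R _ n n')
    (fun m r n => by
      show Bal.tmul R (s • op r • m) n = Bal.tmul R (s • m) (r • n)
      rw [smul_comm, Bal.op_smul_tmul])

theorem Bal.lsmulHom_tmul (s : S) (m : M) (n : N) :
    Bal.lsmulHom R (M := M) (N := N) s (Bal.tmul R m n) = Bal.tmul R (s • m) n :=
  Bal.liftFun_tmul R _ _ _ _ m n

noncomputable instance : SMul S (Bal R M N) := ⟨fun s x => Bal.lsmulHom R s x⟩

theorem Bal.lsmul_tmul (s : S) (m : M) (n : N) :
    s • Bal.tmul R m n = Bal.tmul R (s • m) n :=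
  Bal.lsmulHom_tmul R s m n

theorem Bal.lsmul_one : Bal.lsmulHom R (M := M) (N := N) (1 : S) = AddMonoidHom.id _ :=
  Bal.addHom_ext R fun m n => by
    rw [Bal.lsmulHom_tmul, one_smul, AddMonoidHom.id_apply]

theorem Bal.lsmul_mul (s t : S) :
    Bal.lsmulHom R (M := M) (N := N) (s * t) = (Bal.lsmulHom R s).comp (Bal.lsmulHom R t) :=
  Bal.addHom_ext R fun m n => by
    rw [AddMonoidHom.comp_apply, Bal.lsmulHom_tmul, Bal.lsmulHom_tmul, Bal.lsmulHom_tmul,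
      mul_smul]

theorem Bal.lsmul_addsmul (s t : S) :
    Bal.lsmulHom R (M := M) (N := N) (s + t) = Bal.lsmulHom R s + Bal.lsmulHom R t :=
  Bal.addHom_ext R fun m n => by
    rw [AddMonoidHom.add_apply, Bal.lsmulHom_tmul, Bal.lsmulHom_tmul, Bal.lsmulHom_tmul,
      add_smul, Bal.add_tmul]

theorem Bal.lsmul_zerosmul : Bal.lsmulHom R (M := M) (N := N) (0 : S) = 0 :=
  Bal.addHom_ext R fun m n => by
    rw [Bal.lsmulHom_tmul, zero_smul, Bal.zero_tmul, AddMonoidHom.zero_apply]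

noncomputable instance : Module S (Bal R M N) where
  one_smul x := DFunLike.congr_fun (Bal.lsmul_one R (M := M) (N := N) (S := S)) x
  mul_smul s t x := DFunLike.congr_fun (Bal.lsmul_mul R s t) x
  smul_zero s := (Bal.lsmulHom R (M := M) (N := N) s).map_zero
  smul_add s x y := (Bal.lsmulHom R s).map_add x y
  add_smul s t x := DFunLike.congr_fun (Bal.lsmul_addsmul R s t) x
  zero_smul x := DFunLike.congr_fun (Bal.lsmul_zerosmul R (M := M) (N := N) (S := S)) x

end Left

section Right

variable {S : Type*} [Ring S] [Module Sᵐᵒᵖ N] [SMulCommClass R Sᵐᵒᵖ N]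

/-- The right action on the balanced tensor product through the second factor. -/
noncomputable def Bal.rsmulHom (s : Sᵐᵒᵖ) : Bal R M N →+ Bal R M N :=
  Bal.liftFun R (fun m n => Bal.tmul R m (s • n))
    (fun m m' n => Bal.add_tmul R m m' _)
    (fun m n n' => by
      show Bal.tmul R m (s • (n + n')) = Bal.tmul R m (s • n) + Bal.tmul R m (s • n')
      rw [smul_add, Bal.tmul_add])
    (fun m r n => by
      show Bal.tmul R (op r • m) (s • n) = Bal.tmul R m (s • r • n)
      rw [Bal.op_smul_tmul, smul_comm])

theorem Bal.rsmulHom_tmul (s : Sᵐᵒᵖ) (m : M) (n : N) :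
    Bal.rsmulHom R (M := M) (N := N) s (Bal.tmul R m n) = Bal.tmul R m (s • n) :=
  Bal.liftFun_tmul R _ _ _ _ m n

noncomputable instance : SMul Sᵐᵒᵖ (Bal R M N) := ⟨fun s x => Bal.rsmulHom R s x⟩

theorem Bal.rsmul_tmul (s : Sᵐᵒᵖ) (m : M) (n : N) :
    s • Bal.tmul R m n = Bal.tmul R m (s • n) :=
  Bal.rsmulHom_tmul R s m n

theorem Bal.rsmul_one : Bal.rsmulHom R (M := M) (N := N) (1 : Sᵐᵒᵖ) = AddMonoidHom.id _ :=
  Bal.addHom_ext R fun m n => by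
    rw [Bal.rsmulHom_tmul, one_smul, AddMonoidHom.id_apply]

theorem Bal.rsmul_mul (s t : Sᵐᵒᵖ) :
    Bal.rsmulHom R (M := M) (N := N) (s * t) = (Bal.rsmulHom R s).comp (Bal.rsmulHom R t) :=
  Bal.addHom_ext R fun m n => by
    rw [AddMonoidHom.comp_apply, Bal.rsmulHom_tmul, Bal.rsmulHom_tmul, Bal.rsmulHom_tmul,
      mul_smul]

theorem Bal.rsmul_addsmul (s t : Sᵐᵒᵖ) :
    Bal.rsmulHom R (M := M) (N := N) (s + t) = Bal.rsmulHom R s + Bal.rsmulHom R t :=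
  Bal.addHom_ext R fun m n => by
    rw [AddMonoidHom.add_apply, Bal.rsmulHom_tmul, Bal.rsmulHom_tmul, Bal.rsmulHom_tmul,
      add_smul, Bal.tmul_add]

theorem Bal.rsmul_zerosmul : Bal.rsmulHom R (M := M) (N := N) (0 : Sᵐᵒᵖ) = 0 :=
  Bal.addHom_ext R fun m n => by
    rw [Bal.rsmulHom_tmul, zero_smul, Bal.tmul_zero, AddMonoidHom.zero_apply]

noncomputable instance : Module Sᵐᵒᵖ (Bal R M N) where
  one_smul x := DFunLike.congr_fun (Bal.rsmul_one R (M := M) (N := N) (S := S)) x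
  mul_smul s t x := DFunLike.congr_fun (Bal.rsmul_mul R s t) x
  smul_zero s := (Bal.rsmulHom R (M := M) (N := N) s).map_zero
  smul_add s x y := (Bal.rsmulHom R s).map_add x y
  add_smul s t x := DFunLike.congr_fun (Bal.rsmul_addsmul R s t) x
  zero_smul x := DFunLike.congr_fun (Bal.rsmul_zerosmul R (M := M) (N := N) (S := S)) x

end Right

end BalModule

/-- Suppose `ν : P ⊗[B] Q → A` is an `A`-`A`-bimodule homomorphism that
admits an adjunction element.  If some `A`-`A`-bimodule homomorphism `φ : P ⊗[B] Q → A` is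
a split epimorphism of `A`-`A`-bimodules, then `ν` itself is a split epimorphism of
`A`-`A`-bimodules. -/
theorem counit_split_epi_of_some_split_epi
    {A B P Q : Type*} [Ring A] [Ring B]
    [AddCommGroup P] [Module A P] [Module Bᵐᵒᵖ P] [SMulCommClass A Bᵐᵒᵖ P]
    [AddCommGroup Q] [Module B Q] [Module Aᵐᵒᵖ Q] [SMulCommClass B Aᵐᵒᵖ Q]
    (ν : Bal B P Q →+ A)
    (hνl : ∀ (a : A) (x : Bal B P Q), ν (a • x) = a * ν x)
    (hνr : ∀ (a : A) (x : Bal B P Q), ν (op a • x) = ν x * a)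
    (n : ℕ) (q' : Fin n → Q) (p' : Fin n → P)
    (adj1 : ∀ p : P, ∑ i, ν (Bal.tmul B p (q' i)) • p' i = p)
    (adj2 : ∀ q : Q, ∑ i, op (ν (Bal.tmul B (p' i) q)) • q' i = q)
    (φ : Bal B P Q →+ A)
    (hφl : ∀ (a : A) (x : Bal B P Q), φ (a • x) = a * φ x)
    (hφr : ∀ (a : A) (x : Bal B P Q), φ (op a • x) = φ x * a)
    (hφsplit : ∃ σ : A →+ Bal B P Q,
      (∀ (a c : A), σ (a * c) = a • σ c) ∧ (∀ (a c : A), σ (c * a) = op a • σ c) ∧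
      ∀ a : A, φ (σ a) = a) :
    ∃ σ : A →+ Bal B P Q,
      (∀ (a c : A), σ (a * c) = a • σ c) ∧ (∀ (a c : A), σ (c * a) = op a • σ c) ∧
      ∀ a : A, ν (σ a) = a := by
  obtain ⟨σ, hσl, hσr, hσφ⟩ := hφsplit
  -- the map f : Q → Q with ν (p ⊗ f q) = φ (p ⊗ q)
  set f : Q → Q := fun q => ∑ i, op (φ (Bal.tmul B (p' i) q)) • q' i with hf
  -- tmul as additive hom in each variable
  have tmul_sum : ∀ (p : P) {m : ℕ} (x : Fin m → Q),
      Bal.tmul B p (∑ i, x i) = ∑ i, Bal.tmul B p (x i) := by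
    intro p m x
    exact map_sum (AddMonoidHom.mk' (fun q => Bal.tmul B p q) (fun a b => Bal.tmul_add B p a b))
      x Finset.univ
  have sum_tmul : ∀ (q : Q) {m : ℕ} (x : Fin m → P),
      Bal.tmul B (∑ i, x i) q = ∑ i, Bal.tmul B (x i) q := by
    intro q m x
    exact map_sum (AddMonoidHom.mk' (fun p => Bal.tmul B p q) (fun a b => Bal.add_tmul B a b q))
      x Finset.univ
  have key : ∀ (p : P) (q : Q), ν (Bal.tmul B p (f q)) = φ (Bal.tmul B p q) := by
    intro p q
    have h1 : Bal.tmul B p (f q)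
        = ∑ i, op (φ (Bal.tmul B (p' i) q)) • Bal.tmul B p (q' i) := by
      rw [hf, tmul_sum]
      exact Finset.sum_congr rfl fun i _ => (Bal.rsmul_tmul B _ p (q' i)).symm
    calc ν (Bal.tmul B p (f q))
        = ∑ i, ν (op (φ (Bal.tmul B (p' i) q)) • Bal.tmul B p (q' i)) := by
          rw [h1, map_sum]
      _ = ∑ i, ν (Bal.tmul B p (q' i)) * φ (Bal.tmul B (p' i) q) := by
          exact Finset.sum_congr rfl fun i _ => hνr _ _
      _ = ∑ i, φ (ν (Bal.tmul B p (q' i)) • Bal.tmul B (p' i) q) := by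
          exact Finset.sum_congr rfl fun i _ => (hφl _ _).symm
      _ = φ (∑ i, Bal.tmul B (ν (Bal.tmul B p (q' i)) • p' i) q) := by
          rw [map_sum]
          exact Finset.sum_congr rfl fun i _ => by rw [Bal.lsmul_tmul]
      _ = φ (Bal.tmul B p q) := by rw [← sum_tmul, adj1 p]
  -- f is additive
  have fadd : ∀ q q2 : Q, f (q + q2) = f q + f q2 := by
    intro q q2
    rw [hf]
    simp only [Bal.tmul_add, map_add, op_add, add_smul]
    exact Finset.sum_add_distrib
  -- f commutes with the left B-action
  have fB : ∀ (b : B) (q : Q), f (b • q) = b • f q := by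
    intro b q
    calc f (b • q)
        = ∑ j, op (ν (Bal.tmul B (p' j) (f (b • q)))) • q' j := (adj2 _).symm
      _ = ∑ j, op (ν (Bal.tmul B (p' j) (b • f q))) • q' j := by
          refine Finset.sum_congr rfl fun j _ => by
            rw [key, ← Bal.op_smul_tmul, ← Bal.op_smul_tmul, key]
      _ = b • f q := adj2 _
  -- f commutes with the right A-action
  have fA : ∀ (a : A) (q : Q), f (op a • q) = op a • f q := by
    intro a q
    rw [hf, Finset.smul_sum]
    refine Finset.sum_congr rfl fun i _ => ?_
    rw [← Bal.rsmul_tmul, hφr, op_mul, mul_smul]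
  -- the bimodule endomorphism g of Bal B P Q
  set g : Bal B P Q →+ Bal B P Q :=
    Bal.liftFun B (fun p q => Bal.tmul B p (f q))
      (fun p p2 q => Bal.add_tmul B p p2 (f q))
      (fun p q q2 => by show Bal.tmul B p (f (q + q2)) = _; rw [fadd]; exact Bal.tmul_add B p _ _)
      (fun p b q => by show Bal.tmul B (op b • p) (f q) = Bal.tmul B p (f (b • q)); rw [Bal.op_smul_tmul, fB]) with hg
  have hgt : ∀ (p : P) (q : Q), g (Bal.tmul B p q) = Bal.tmul B p (f q) := by
    intro p q; rw [hg]; exact Bal.liftFun_tmul B _ _ _ _ p q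
  have hgν : ∀ x, ν (g x) = φ x := by
    intro x
    refine Bal.induction_on B (C := fun z => ν (g z) = φ z) x (by simp) ?_ ?_
    · intro p q; rw [hgt, key]
    · intro x y hx hy; simp only [map_add, hx, hy]
  have hgl : ∀ (a : A) (x : Bal B P Q), g (a • x) = a • g x := by
    intro a x
    refine Bal.induction_on B (C := fun z => g (a • z) = a • g z) x (by simp) ?_ ?_
    · intro p q
      rw [Bal.lsmul_tmul, hgt, hgt, Bal.lsmul_tmul]
    · intro x y hx hy
      have hsx : a • (x + y) = a • x + a • y := (Bal.lsmulHom B a).map_add x y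
      have hsg : a • (g x + g y) = a • g x + a • g y := (Bal.lsmulHom B a).map_add _ _
      rw [hsx, map_add, hx, hy, map_add, hsg]
  have hgr : ∀ (a : A) (x : Bal B P Q), g (op a • x) = op a • g x := by
    intro a x
    refine Bal.induction_on B (C := fun z => g (op a • z) = op a • g z) x (by simp) ?_ ?_
    · intro p q
      rw [Bal.rsmul_tmul, hgt, hgt, Bal.rsmul_tmul, fA]
    · intro x y hx hy
      have hsx : op a • (x + y) = op a • x + op a • y := (Bal.rsmulHom B (op a)).map_add x y
      have hsg : op a • (g x + g y) = op a • g x + op a • g y :=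
        (Bal.rsmulHom B (op a)).map_add _ _
      rw [hsx, map_add, hx, hy, map_add, hsg]
  refine ⟨g.comp σ, fun a c => ?_, fun a c => ?_, fun a => ?_⟩
  · simp only [AddMonoidHom.comp_apply, hσl, hgl]
  · simp only [AddMonoidHom.comp_apply, hσr, hgr]
  · simp only [AddMonoidHom.comp_apply, hgν, hσφ]
end

section
/- Let k be a field and let A and B be finite-dimensional symmetric k-algebras. Then every bimodule ${}_AP_B$ on which k acts centrally and which is left and right finite projective satisfies Hom_B(P_B, B_B) ≅ Hom_A({}_AP, {}_AA) as B-A-bimodules; that is, P is automatically a Frobenius bimodule. -/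
/-! ### A balanced tensor product of a right module and a left module
over a possibly noncommutative ring, constructed as a quotient of the
`ℤ`-tensor product. -/

open MulOpposite
open scoped TensorProduct

section HomBimodule

variable {A B P Q : Type*} [Ring A] [Ring B]
  [AddCommGroup P] [Module A P] [Module Bᵐᵒᵖ P] [SMulCommClass A Bᵐᵒᵖ P]
  [AddCommGroup Q] [Module B Q] [Module Aᵐᵒᵖ Q] [SMulCommClass B Aᵐᵒᵖ Q]

/-- Right multiplication by `b` as a left `A`-module endomorphism of `P`. -/
noncomputable def rmulLinear (b : B) : P →ₗ[A] P where
  toFun p := op b • p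
  map_add' := smul_add (op b)
  map_smul' a p := (smul_comm a (op b) p).symm

/-- Left multiplication by `a` as a right `B`-module endomorphism of `P`. -/
noncomputable def lmulLinear (a : A) : P →ₗ[Bᵐᵒᵖ] P where
  toFun p := a • p
  map_add' := smul_add a
  map_smul' b p := smul_comm a b p

/-- The right `A`-action (through the domain) on `Hom_B(P_B, B_B)`:
`(f · a) p = f (a • p)`. -/
noncomputable instance : Module Aᵐᵒᵖ (P →ₗ[Bᵐᵒᵖ] B) where
  smul a f := f.comp (lmulLinear a.unop)
  one_smul f := LinearMap.ext fun p => by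
    show f ((1 : Aᵐᵒᵖ).unop • p) = f p
    rw [unop_one, one_smul]
  mul_smul a a' f := LinearMap.ext fun p => by
    show f ((a * a').unop • p) = f (a'.unop • a.unop • p)
    rw [MulOpposite.unop_mul, mul_smul]
  smul_zero a := LinearMap.ext fun p => rfl
  smul_add a f g := LinearMap.ext fun p => rfl
  add_smul a a' f := LinearMap.ext fun p => by
    show f ((a + a').unop • p) = f (a.unop • p) + f (a'.unop • p)
    rw [MulOpposite.unop_add, add_smul, map_add]
  zero_smul f := LinearMap.ext fun p => by
    show f ((0 : Aᵐᵒᵖ).unop • p) = 0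
    rw [MulOpposite.unop_zero, zero_smul, map_zero]

theorem opSmul_homBB_apply (a : A) (f : P →ₗ[Bᵐᵒᵖ] B) (p : P) :
    (op a • f) p = f (a • p) := rfl

/-- The left `B`-action (through the domain) on `Hom_A({}_A P, {}_A A)`:
`(b · f) p = f (p · b)`. -/
noncomputable instance : Module B (P →ₗ[A] A) where
  smul b f := f.comp (rmulLinear b)
  one_smul f := LinearMap.ext fun p => by
    show f (op (1 : B) • p) = f p
    rw [op_one, one_smul]
  mul_smul b b' f := LinearMap.ext fun p => by
    show f (op (b * b') • p) = f (op b' • op b • p)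
    rw [op_mul, mul_smul]
  smul_zero b := LinearMap.ext fun p => rfl
  smul_add b f g := LinearMap.ext fun p => rfl
  add_smul b b' f := LinearMap.ext fun p => by
    show f (op (b + b') • p) = f (op b • p) + f (op b' • p)
    rw [op_add, add_smul, map_add]
  zero_smul f := LinearMap.ext fun p => by
    show f (op (0 : B) • p) = 0
    rw [op_zero, zero_smul, map_zero]

theorem smul_homAA_apply (b : B) (f : P →ₗ[A] A) (p : P) :
    (b • f) p = f (op b • p) := rfl

noncomputable instance : SMulCommClass B Aᵐᵒᵖ (P →ₗ[A] A) :=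
  ⟨fun _ _ _ => LinearMap.ext fun _ => rfl⟩

noncomputable instance : SMulCommClass B Aᵐᵒᵖ (P →ₗ[Bᵐᵒᵖ] B) :=
  ⟨fun _ _ _ => LinearMap.ext fun _ => rfl⟩

/-- The map `Q → Hom_A({}_A P, {}_A A)`, `q ↦ ν(- ⊗ q)`. -/
noncomputable def nuDual (ν : Bal B P Q →+ A)
    (hνl : ∀ (a : A) (x : Bal B P Q), ν (a • x) = a * ν x) (q : Q) : P →ₗ[A] A where
  toFun p := ν (Bal.tmul B p q)
  map_add' p p' := by
    show ν (Bal.tmul B (p + p') q) = ν (Bal.tmul B p q) + ν (Bal.tmul B p' q)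
    rw [Bal.add_tmul, map_add]
  map_smul' a p := by
    show ν (Bal.tmul B (a • p) q) = a • ν (Bal.tmul B p q)
    rw [← Bal.lsmul_tmul, hνl, smul_eq_mul]

@[simp] theorem nuDual_apply (ν : Bal B P Q →+ A)
    (hνl : ∀ (a : A) (x : Bal B P Q), ν (a • x) = a * ν x) (q : Q) (p : P) :
    nuDual ν hνl q p = ν (Bal.tmul B p q) := rfl

/-- The map `Q → Hom_B(P_B, B_B)`, `q ↦ μ(q ⊗ -)`. -/
noncomputable def muDual (μ : Bal A Q P →+ B)
    (hμr : ∀ (b : B) (y : Bal A Q P), μ (op b • y) = μ y * b) (q : Q) : P →ₗ[Bᵐᵒᵖ] B where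
  toFun p := μ (Bal.tmul A q p)
  map_add' p p' := by
    show μ (Bal.tmul A q (p + p')) = μ (Bal.tmul A q p) + μ (Bal.tmul A q p')
    rw [Bal.tmul_add, map_add]
  map_smul' b p := by
    show μ (Bal.tmul A q (b • p)) = b • μ (Bal.tmul A q p)
    rw [← Bal.rsmul_tmul, MulOpposite.smul_eq_mul_unop]
    conv_lhs => rw [← MulOpposite.op_unop b]
    rw [hμr]

@[simp] theorem muDual_apply (μ : Bal A Q P →+ B)
    (hμr : ∀ (b : B) (y : Bal A Q P), μ (op b • y) = μ y * b) (q : Q) (p : P) :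
    muDual μ hμr q p = μ (Bal.tmul A q p) := rfl

end HomBimodule

/-! ### Auxiliary: duality for finite projective modules over a ring with a
nondegenerate symmetric trace form -/

section KeyLemma

variable {k R P : Type*} [Field k] [Ring R] [Algebra k R]
  [AddCommGroup P] [Module R P] [Module k P] [IsScalarTower k R P]

/-- Composition with a `k`-linear trace `τ : R → k` sends `R`-linear maps `P → R`
to `k`-linear maps `P → k`. -/
noncomputable def traceComp (τ : R →ₗ[k] k) (g : P →ₗ[R] R) : P →ₗ[k] k where
  toFun p := τ (g p)
  map_add' p q := by
    show τ (g (p + q)) = τ (g p) + τ (g q)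
    rw [map_add, map_add]
  map_smul' c p := by
    show τ (g (c • p)) = c • τ (g p)
    rw [← algebraMap_smul R c p, map_smul, smul_eq_mul, ← Algebra.smul_def, map_smul]

@[simp] theorem traceComp_apply (τ : R →ₗ[k] k) (g : P →ₗ[R] R) (p : P) :
    traceComp τ g p = τ (g p) := rfl

theorem traceComp_add (τ : R →ₗ[k] k) (g g' : P →ₗ[R] R) :
    traceComp τ (g + g') = traceComp τ g + traceComp τ g' := by
  ext p; simp

theorem traceComp_bijective [Module.Finite R P] [Module.Projective R P]
    (τ : R →ₗ[k] k)
    (hsurj : ∀ μ : R →ₗ[k] k, ∃ r : R, ∀ y, τ (y * r) = μ y)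
    (hinj : ∀ r : R, (∀ y, τ (y * r) = 0) → r = 0) :
    Function.Bijective (traceComp (P := P) τ) := by
  obtain ⟨n, s, hs⟩ := Module.Finite.exists_fin' R P
  obtain ⟨i, hi⟩ := Module.projective_lifting_property s LinearMap.id hs
  constructor
  · intro g₁ g₂ h
    ext p
    have : g₁ p - g₂ p = 0 := by
      refine hinj _ fun y => ?_
      have h1 : y * (g₁ p - g₂ p) = g₁ (y • p) - g₂ (y • p) := by
        rw [map_smul, map_smul, smul_eq_mul, smul_eq_mul, mul_sub]
      rw [h1, map_sub]
      have := congrArg (fun F => F (y • p)) h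
      simp only [traceComp_apply] at this
      rw [this, sub_self]
    exact sub_eq_zero.mp this
  · intro lam
    -- auxiliary k-linear map `y ↦ y • m`
    letI auxmap : P → (R →ₗ[k] P) := fun m =>
      { toFun := fun (y : R) => y • m
        map_add' := fun y z => add_smul y z m
        map_smul' := fun c y => by
          show (c • y) • m = c • (y • m)
          exact smul_assoc c y m }
    letI aux : P → (R →ₗ[k] k) := fun m => lam.comp (auxmap m)
    choose r hr using fun j : Fin n => hsurj (aux (s (Pi.single j 1)))
    letI g₀ : (Fin n → R) →ₗ[R] R :=
      { toFun := fun x => ∑ j, x j * r j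
        map_add' := fun x y => by simp [add_mul, Finset.sum_add_distrib]
        map_smul' := fun y x => by simp [Finset.mul_sum, mul_assoc] }
    refine ⟨g₀.comp i, ?_⟩
    ext p
    have key : ∀ x : Fin n → R, ∑ j, x j • s (Pi.single j 1) = s x := by
      intro x
      have : ∀ j : Fin n, x j • s (Pi.single j (1 : R)) = s (Pi.single j (x j)) := by
        intro j
        rw [← map_smul]
        congr 1
        ext t
        by_cases h : t = j
        · subst h; simp
        · simp [Pi.single_eq_of_ne h]
      simp_rw [this, ← map_sum, Finset.univ_sum_single]
    have hsi : s (i p) = p := congrArg (fun F => F p) hi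
    calc traceComp τ (g₀.comp i) p = ∑ j, τ (i p j * r j) := by
            simp [g₀, map_sum]
      _ = ∑ j, lam (i p j • s (Pi.single j 1)) := by
            refine Finset.sum_congr rfl fun j _ => ?_
            rw [hr j]
            rfl
      _ = lam p := by rw [← map_sum, key, hsi]

end KeyLemma

section OpComp

variable {k B P : Type*} [Field k] [Ring B]
  [AddCommGroup P] [Module Bᵐᵒᵖ P]

/-- Post-composition with `op : B → Bᵐᵒᵖ`. -/
noncomputable def opComp (f : P →ₗ[Bᵐᵒᵖ] B) : P →ₗ[Bᵐᵒᵖ] Bᵐᵒᵖ where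
  toFun p := op (f p)
  map_add' p q := by
    show op (f (p + q)) = op (f p) + op (f q)
    rw [map_add, op_add]
  map_smul' c p := by
    show op (f (c • p)) = c • op (f p)
    rw [map_smul]
    rfl

@[simp] theorem opComp_apply (f : P →ₗ[Bᵐᵒᵖ] B) (p : P) : opComp f p = op (f p) := rfl

theorem opComp_add (f g : P →ₗ[Bᵐᵒᵖ] B) : opComp (f + g) = opComp f + opComp g := by
  ext p; simp

theorem opComp_bijective : Function.Bijective (opComp (B := B) (P := P)) := by
  constructor
  · intro f g h
    ext p
    have := congrArg (fun F => unop (F p)) h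
    simpa [opComp] using this
  · intro g
    refine ⟨{ toFun := fun p => unop (g p)
              map_add' := fun p q => by
                show unop (g (p + q)) = unop (g p) + unop (g q)
                rw [map_add]; rfl
              map_smul' := fun c p => by
                show unop (g (c • p)) = c • unop (g p)
                rw [map_smul]
                rfl }, ?_⟩
    ext p
    simp [opComp]

end OpComp

/-- Over a field `k`, if `A` and `B` are finite-dimensional symmetric
`k`-algebras, then every `k`-central, left and right finite projective bimodule `P` linking
`A` and `B` satisfies `Hom_B(P_B, B_B) ≅ Hom_A({}_A P, {}_A A)` as `B`-`A`-bimodules;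
`P` is automatically a Frobenius bimodule. -/
theorem bimodule_over_symmetric_algebras_is_frobenius
    {k A B P : Type*} [Field k] [Ring A] [Algebra k A] [Ring B] [Algebra k B]
    [FiniteDimensional k A] [FiniteDimensional k B]
    -- `A` is a symmetric algebra: `A ≅ A* = Hom_k(A, k)` as `A`-`A`-bimodules
    (hA : ∃ φ : A →ₗ[k] Module.Dual k A, Function.Bijective φ ∧
      (∀ a x y : A, φ (a * x) y = φ x (y * a)) ∧
      (∀ a x y : A, φ (x * a) y = φ x (a * y)))
    -- `B` is a symmetric algebra
    (hB : ∃ ψ : B →ₗ[k] Module.Dual k B, Function.Bijective ψ ∧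
      (∀ b x y : B, ψ (b * x) y = ψ x (y * b)) ∧
      (∀ b x y : B, ψ (x * b) y = ψ x (b * y)))
    [AddCommGroup P] [Module A P] [Module Bᵐᵒᵖ P] [SMulCommClass A Bᵐᵒᵖ P]
    [Module k P] [IsScalarTower k A P] [IsScalarTower k Bᵐᵒᵖ P]
    [Module.Finite A P] [Module.Projective A P]
    [Module.Finite Bᵐᵒᵖ P] [Module.Projective Bᵐᵒᵖ P] :
    ∃ Θ : (P →ₗ[Bᵐᵒᵖ] B) → (P →ₗ[A] A),
      Function.Bijective Θ ∧
      (∀ f g : P →ₗ[Bᵐᵒᵖ] B, Θ (f + g) = Θ f + Θ g) ∧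
      (∀ (b : B) (f : P →ₗ[Bᵐᵒᵖ] B), Θ (b • f) = b • Θ f) ∧
      (∀ (a : Aᵐᵒᵖ) (f : P →ₗ[Bᵐᵒᵖ] B), Θ (a • f) = a • Θ f) := by
  obtain ⟨φ, hφbij, hφ1, hφ2⟩ := hA
  obtain ⟨ψ, hψbij, hψ1, hψ2⟩ := hB
  set τA : A →ₗ[k] k := φ 1 with hτAdef
  set τB : B →ₗ[k] k := ψ 1 with hτBdef
  have hφa : ∀ a y : A, φ a y = τA (y * a) := fun a y => by
    have := hφ1 a 1 y; rwa [mul_one] at this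
  have hφa' : ∀ a y : A, φ a y = τA (a * y) := fun a y => by
    have := hφ2 a 1 y; rwa [one_mul] at this
  have τA_symm : ∀ x y : A, τA (x * y) = τA (y * x) := fun x y => by
    rw [← hφa' y x, hφa y x]
  have hψa : ∀ b y : B, ψ b y = τB (y * b) := fun b y => by
    have := hψ1 b 1 y; rwa [mul_one] at this
  have hψa' : ∀ b y : B, ψ b y = τB (b * y) := fun b y => by
    have := hψ2 b 1 y; rwa [one_mul] at this
  have τB_symm : ∀ x y : B, τB (x * y) = τB (y * x) := fun x y => by
    rw [← hψa' y x, hψa y x]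
  have hAsurj : ∀ μ : A →ₗ[k] k, ∃ r : A, ∀ y, τA (y * r) = μ y := by
    intro μ
    obtain ⟨a, ha⟩ := hφbij.2 μ
    exact ⟨a, fun y => by rw [← hφa a y, ha]⟩
  have hAinj : ∀ r : A, (∀ y, τA (y * r) = 0) → r = 0 := by
    intro r h
    apply hφbij.1
    rw [map_zero]
    exact LinearMap.ext fun y => by rw [hφa r y, h y]; rfl
  letI τB' : Bᵐᵒᵖ →ₗ[k] k :=
    { toFun := fun y => τB y.unop
      map_add' := fun y z => by
        show τB (unop (y + z)) = τB y.unop + τB z.unop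
        rw [unop_add, map_add]
      map_smul' := fun c y => by
        show τB (unop (c • y)) = c • τB y.unop
        rw [unop_smul, map_smul] }
  have hBsurj : ∀ μ : Bᵐᵒᵖ →ₗ[k] k, ∃ r : Bᵐᵒᵖ, ∀ y, τB' (y * r) = μ y := by
    intro μ
    letI μ' : B →ₗ[k] k :=
      { toFun := fun b => μ (op b)
        map_add' := fun b b' => by
          show μ (op (b + b')) = μ (op b) + μ (op b')
          rw [op_add, map_add]
        map_smul' := fun c b => by
          show μ (op (c • b)) = c • μ (op b)
          rw [op_smul, map_smul] }
    obtain ⟨b₀, hb₀⟩ := hψbij.2 μ'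
    refine ⟨op b₀, fun y => ?_⟩
    have h1 : τB' (y * op b₀) = τB (b₀ * y.unop) := rfl
    have h2 : ψ b₀ y.unop = μ' y.unop := by rw [hb₀]
    rw [h1, ← hψa' b₀ y.unop, h2]
    show μ (op y.unop) = μ y
    rw [op_unop]
  have hBinj : ∀ r : Bᵐᵒᵖ, (∀ y, τB' (y * r) = 0) → r = 0 := by
    intro r h
    have : r.unop = 0 := by
      apply hψbij.1
      rw [map_zero]
      refine LinearMap.ext fun b => ?_
      rw [hψa' r.unop b]
      have := h (op b)
      exact this
    rw [← op_unop r, this, op_zero]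
  have hΦA := traceComp_bijective (P := P) τA hAsurj hAinj
  have hΦB' := traceComp_bijective (R := Bᵐᵒᵖ) (P := P) τB' hBsurj hBinj
  letI ΦB : (P →ₗ[Bᵐᵒᵖ] B) → (P →ₗ[k] k) := fun f => traceComp τB' (opComp f)
  have hΦB : Function.Bijective ΦB := hΦB'.comp opComp_bijective
  letI eA := Equiv.ofBijective _ hΦA
  have hTheta : ∀ x : P →ₗ[k] k, traceComp τA (eA.symm x) = x := fun x =>
    eA.apply_symm_apply x
  refine ⟨fun f => eA.symm (ΦB f), eA.symm.bijective.comp hΦB, ?_, ?_, ?_⟩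
  · intro f g
    apply hΦA.1
    show traceComp τA (eA.symm (ΦB (f + g))) = traceComp τA (eA.symm (ΦB f) + eA.symm (ΦB g))
    rw [hTheta, traceComp_add, hTheta, hTheta]
    show traceComp τB' (opComp (f + g)) = _
    rw [opComp_add, traceComp_add]
  · intro b f
    apply hΦA.1
    show traceComp τA (eA.symm (ΦB (b • f))) = traceComp τA (b • eA.symm (ΦB f))
    rw [hTheta]
    ext p
    have hg := congrArg (fun F : P →ₗ[k] k => F (op b • p)) (hTheta (ΦB f))
    have lhs1 : ΦB (b • f) p = τB (b * f p) := by
      show τB' (op ((b • f) p)) = τB (b * f p)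
      rw [LinearMap.smul_apply, smul_eq_mul]
      rfl
    have rhs1 : traceComp τA (b • eA.symm (ΦB f)) p
        = τA ((eA.symm (ΦB f)) (op b • p)) := by
      rw [traceComp_apply, smul_homAA_apply]
    rw [lhs1, rhs1]
    have : τA ((eA.symm (ΦB f)) (op b • p)) = ΦB f (op b • p) := hg
    rw [this]
    show τB (b * f p) = τB (f (op b • p))
    have hf : f (op b • p) = f p * b := by
      rw [map_smul]
      rfl
    rw [hf, τB_symm]
  · intro a f
    apply hΦA.1
    show traceComp τA (eA.symm (ΦB (a • f))) = traceComp τA (a • eA.symm (ΦB f))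
    rw [hTheta]
    ext p
    have hg := congrArg (fun F : P →ₗ[k] k => F (a.unop • p)) (hTheta (ΦB f))
    have lhs1 : ΦB (a • f) p = τB (f (a.unop • p)) := by
      show τB' (op ((a • f) p)) = τB (f (a.unop • p))
      have : (a • f) p = f (a.unop • p) := by
        conv_lhs => rw [← op_unop a]
        rw [opSmul_homBB_apply]
      rw [this]
      rfl
    have rhs1 : traceComp τA (a • eA.symm (ΦB f)) p
        = τA ((eA.symm (ΦB f)) p * a.unop) := by
      rw [traceComp_apply, LinearMap.smul_apply, MulOpposite.smul_eq_mul_unop]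
    rw [lhs1, rhs1, τA_symm]
    have : τA (a.unop * (eA.symm (ΦB f)) p) = τA ((eA.symm (ΦB f)) (a.unop • p)) := by
      rw [map_smul, smul_eq_mul]
    rw [this]
    have : τA ((eA.symm (ΦB f)) (a.unop • p)) = ΦB f (a.unop • p) := hg
    rw [this]
    rfl
end
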